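/- Let k be a positive integer, let l be a non-negative integer such that k + l > 2, and let c be a non-negative integer. Let Ω ⊆ ℝ³ with coordinates (A,B,D) be the set defined by the inequalities A^k B^l ≤ D^c, D ≥ 2A, A ≥ B ≥ 1, and A ≥ k + l. Define L(A,B,D) = kA + lB − cD. Then L(A,B,D) < 0 for every (A,B,D) ∈ Ω. -/

import Mathlib

-- L0: Bernoulli-type
lemma auxL0 (x n : ℕ) : x^(n+1) + (n+1)*x^n ≤ (x+1)^(n+1) := by
  induction n with
  | zero => simp [pow_succ]
  | succ n ih =>
    have h : (x+1) * (x^(n+1) + (n+1)*x^n) ≤ (x+1) * (x+1)^(n+1) :=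
      Nat.mul_le_mul_left _ ih
    calc x^(n+2) + (n+2)*x^(n+1)
        ≤ x^(n+2) + (n+2)*x^(n+1) + (n+1)*x^n := Nat.le_add_right _ _
      _ = (x+1) * (x^(n+1) + (n+1)*x^n) := by ring
      _ ≤ (x+1) * (x+1)^(n+1) := h
      _ = (x+1)^(n+2) := by ring

-- CL: core lemma
lemma auxCL (l : ℕ) (hl : 2 ≤ l) : 2*l^l < (l+1)^l := by
  obtain ⟨j, rfl⟩ : ∃ j, l = j + 2 := ⟨l - 2, by omega⟩
  have h0 : (2*j+3)*(j+2)^j ≤ (j+3)^(j+1) := by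
    have := auxL0 (j+2) j
    calc (2*j+3)*(j+2)^j = (j+2)^(j+1) + (j+1)*(j+2)^j := by ring
      _ ≤ (j+3)^(j+1) := by convert this using 2 <;> ring
  have hX : 0 < (j+2)^j := Nat.pow_pos (by omega)
  calc 2*(j+2)^(j+2) = (2*j^2+8*j+8)*(j+2)^j := by ring
    _ < (2*j^2+9*j+9)*(j+2)^j := by
        exact (Nat.mul_lt_mul_right hX).mpr (by omega)
    _ = (j+3)*((2*j+3)*(j+2)^j) := by ring
    _ ≤ (j+3)*(j+3)^(j+1) := Nat.mul_le_mul_left _ h0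
    _ = (j+2+1)^(j+2) := by ring

-- L2': (x+1)^d * (x-d) ≤ x^(d+1) for d ≤ x
lemma auxL2' (x : ℕ) : ∀ d : ℕ, d ≤ x → (x+1)^d * (x-d) ≤ x^(d+1) := by
  intro d
  induction d with
  | zero => intro _; simpa using Nat.le_refl x
  | succ d ih =>
    intro h
    have hd : d ≤ x := by omega
    have ih' := ih hd
    have key : (x+1)*(x-(d+1)) ≤ x*(x-d) := by
      zify [h, hd]
      nlinarith
    calc (x+1)^(d+1) * (x-(d+1)) = (x+1)^d * ((x+1)*(x-(d+1))) := by ring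
      _ ≤ (x+1)^d * (x*(x-d)) := Nat.mul_le_mul_left _ key
      _ = x * ((x+1)^d * (x-d)) := by ring
      _ ≤ x * x^(d+1) := Nat.mul_le_mul_left _ ih'
      _ = x^(d+2) := by ring

-- L2: (x+1)^d ≤ 3 x^d when 3d ≤ 2x
lemma auxL2 (x d : ℕ) (h : 3*d ≤ 2*x) : (x+1)^d ≤ 3*x^d := by
  rcases Nat.eq_zero_or_pos d with hd0 | hd1
  · subst hd0; simp
  · have hdx : d < x := by omega
    have h2 := auxL2' x d (le_of_lt hdx)
    have hx3 : x ≤ 3*(x-d) := by omega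
    have : (x+1)^d * (x-d) ≤ (3*x^d) * (x-d) := by
      calc (x+1)^d * (x-d) ≤ x^(d+1) := h2
        _ = x^d * x := by ring
        _ ≤ x^d * (3*(x-d)) := Nat.mul_le_mul_left _ hx3
        _ = (3*x^d) * (x-d) := by ring
    exact Nat.le_of_mul_le_mul_right this (by omega)

-- F lemma
lemma auxF (c d : ℕ) (hd : 1 ≤ d) (hdc : d+1 ≤ c) :
    ∀ l : ℕ, c + d ≤ l → 2^c * (l+1)^d ≤ 2*(c+d)^l := by
  intro l hl
  induction l, hl using Nat.le_induction with
  | base =>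
    have hL2 : (c+d+1)^d ≤ 3*(c+d)^d := auxL2 (c+d) d (by omega)
    have h23 : 3*2^c ≤ 2*3^c := by
      obtain ⟨c', rfl⟩ : ∃ c', c = c' + 1 := ⟨c - 1, by omega⟩
      have : 2^c' ≤ 3^c' := Nat.pow_le_pow_left (by norm_num) _
      calc 3*2^(c'+1) = 6*2^c' := by ring
        _ ≤ 6*3^c' := by omega
        _ = 2*3^(c'+1) := by ring
    have h3m : 3^c ≤ (c+d)^c := Nat.pow_le_pow_left (by omega) _
    calc 2^c * (c+d+1)^d ≤ 2^c * (3*(c+d)^d) := Nat.mul_le_mul_left _ hL2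
      _ = (3*2^c) * (c+d)^d := by ring
      _ ≤ (2*3^c) * (c+d)^d := Nat.mul_le_mul_right _ h23
      _ ≤ (2*(c+d)^c) * (c+d)^d := by
          have := Nat.mul_le_mul_right ((c+d)^d) (Nat.mul_le_mul_left 2 h3m)
          simpa [Nat.mul_assoc] using this
      _ = 2*(c+d)^(c+d) := by rw [Nat.mul_assoc, ← pow_add]
  | succ l hml ih =>
    have hL2 : (l+2)^d ≤ 3*(l+1)^d := by
      have := auxL2 (l+1) d (by omega)
      simpa using this
    calc 2^c * (l+1+1)^d ≤ 2^c * (3*(l+1)^d) := Nat.mul_le_mul_left _ (by simpa using hL2)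
      _ = 3 * (2^c * (l+1)^d) := by ring
      _ ≤ 3 * (2*(c+d)^l) := Nat.mul_le_mul_left _ ih
      _ ≤ (c+d) * (2*(c+d)^l) := Nat.mul_le_mul_right _ (by omega)
      _ = 2*(c+d)^(l+1) := by ring

-- NA: the key nat inequality
lemma auxNA (k c l : ℕ) (hk : 1 ≤ k) (hkc : k+1 ≤ 2*c) (hml : 2*c - k ≤ l)
    (hcl : c ≤ l) (h3 : 3 ≤ k+l) :
    2^c * l^l < (2*c-k)^l * (k+l)^(k+l-c) := by
  set m := 2*c - k with hm
  have hm1 : 1 ≤ m := by omega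
  have hl2 : 2 ≤ l := by omega
  have hCL := auxCL l hl2
  have hstep : (l+1)^(k+l-c) ≤ (k+l)^(k+l-c) := Nat.pow_le_pow_left (by omega) _
  have main : 2^c * l^l < m^l * (l+1)^(k+l-c) := by
    rcases le_or_gt m c with hmc | hcm
    · -- m ≤ c; exponent k+l-c = (c-m) + l
      have hexp : k+l-c = (c-m) + l := by omega
      have hml' : 2^(m-1) ≤ m^l := by
        rcases Nat.eq_or_lt_of_le hm1 with h1 | h2
        · simp [← h1]
        · calc 2^(m-1) ≤ 2^l := Nat.pow_le_pow_right (by norm_num) (by omega)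
            _ ≤ m^l := Nat.pow_le_pow_left (by omega) _
      have hcm' : 2^(c-m) ≤ (l+1)^(c-m) := Nat.pow_le_pow_left (by omega) _
      have h2c : (2:ℕ)^c = 2^(m-1) * 2^(c-m) * 2 := by
        rw [Nat.mul_assoc, ← pow_succ, ← pow_add]
        congr 1
        omega
      calc 2^c * l^l = 2^(m-1) * 2^(c-m) * (2*l^l) := by rw [h2c]; ring
        _ < 2^(m-1) * 2^(c-m) * (l+1)^l := by
            have hpos : 0 < 2^(m-1) * 2^(c-m) := by positivity
            exact (Nat.mul_lt_mul_left hpos).mpr hCL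
        _ ≤ m^l * ((l+1)^(c-m) * (l+1)^l) := by
            calc 2^(m-1) * 2^(c-m) * (l+1)^l ≤ m^l * 2^(c-m) * (l+1)^l := by
                  exact Nat.mul_le_mul_right _ (Nat.mul_le_mul_right _ hml')
              _ ≤ m^l * (l+1)^(c-m) * (l+1)^l := by
                  exact Nat.mul_le_mul_right _ (Nat.mul_le_mul_left _ hcm')
              _ = m^l * ((l+1)^(c-m) * (l+1)^l) := by ring
        _ = m^l * (l+1)^(k+l-c) := by rw [← pow_add, ← hexp]
    · -- c < m; d := m - c
      set d := m - c with hdd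
      have hd1 : 1 ≤ d := by omega
      have hdc : d + 1 ≤ c := by omega
      have hcd : c + d = m := by omega
      have hF : 2^c * (l+1)^d ≤ 2*m^l := by
        have := auxF c d hd1 hdc l (by omega)
        rwa [hcd] at this
      have hexp : k+l-c = l - d := by omega
      have key : (2^c * l^l) * (l+1)^d < (m^l * (l+1)^(l-d)) * (l+1)^d := by
        calc (2^c * l^l) * (l+1)^d = (2^c * (l+1)^d) * l^l := by ring
          _ ≤ (2*m^l) * l^l := Nat.mul_le_mul_right _ hF
          _ = m^l * (2*l^l) := by ring
          _ < m^l * (l+1)^l := by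
              exact (Nat.mul_lt_mul_left (Nat.pow_pos (by omega))).mpr hCL
          _ = (m^l * (l+1)^(l-d)) * (l+1)^d := by
              rw [Nat.mul_assoc, ← pow_add]
              congr 2
              omega
      have := Nat.lt_of_mul_lt_mul_right key
      rwa [hexp]
  calc 2^c * l^l < m^l * (l+1)^(k+l-c) := main
    _ ≤ m^l * (k+l)^(k+l-c) := Nat.mul_le_mul_left _ hstep

set_option maxHeartbeats 1000000 in
/-- Let `k ≥ 1`, `l ≥ 0`, `c ≥ 0` be integers with `k + l > 2`.
For reals `(A, B, D)` with `A^k B^l ≤ D^c`, `D ≥ 2A`, `A ≥ B ≥ 1`, and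
`A ≥ k + l`, one has `L(A,B,D) = kA + lB − cD < 0`. -/
theorem stmt_4 (k l c : ℕ) (hk : 1 ≤ k) (hkl : 2 < k + l)
    (A B D : ℝ)
    (h1 : A ^ k * B ^ l ≤ D ^ c) (h2 : 2 * A ≤ D)
    (h3 : B ≤ A) (h4 : 1 ≤ B) (h5 : (k : ℝ) + (l : ℝ) ≤ A) :
    (k : ℝ) * A + (l : ℝ) * B - (c : ℝ) * D < 0 := by
  have hkl3 : 3 ≤ k + l := hkl
  have hA3 : (3:ℝ) ≤ A := by
    have h : (3:ℝ) ≤ (k:ℝ) + l := by exact_mod_cast hkl3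
    linarith
  have hA1 : (1:ℝ) ≤ A := le_trans h4 h3
  have hA0 : (0:ℝ) < A := by linarith
  have hB0 : (0:ℝ) < B := by linarith
  have hBl1 : (1:ℝ) ≤ B^l := one_le_pow₀ h4
  have hAk1 : (1:ℝ) ≤ A^k := one_le_pow₀ hA1
  rcases Nat.eq_zero_or_pos c with hc0 | hc1
  · exfalso
    subst hc0
    simp only [pow_zero] at h1
    have hAAk : A ≤ A^k := le_self_pow₀ hA1 (by omega)
    nlinarith
  · have hcR : (0:ℝ) < c := by exact_mod_cast hc1
    suffices hlt : (k:ℝ)*A + l*B < c*D by linarith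
    have hTnn : (0:ℝ) ≤ (k:ℝ)*A + l*B :=
      add_nonneg (mul_nonneg (Nat.cast_nonneg k) hA0.le) (mul_nonneg (Nat.cast_nonneg l) hB0.le)
    have hTn : (k:ℝ)*A + l*B ≤ ((k:ℝ)+l)*A := by
      nlinarith [mul_le_mul_of_nonneg_left h3 (Nat.cast_nonneg l : (0:ℝ) ≤ l)]
    have hTA2 : (k:ℝ)*A + l*B ≤ A*A := by
      nlinarith [mul_le_mul_of_nonneg_right h5 hA0.le]
    have hcD : 2*(c:ℝ)*A ≤ c*D := by
      nlinarith [mul_le_mul_of_nonneg_left h2 (Nat.cast_nonneg c : (0:ℝ) ≤ c)]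
    rcases lt_or_ge (k+l) (2*c) with hbig | hsmall
    · have hlt1 : ((k:ℝ)+l) + 1 ≤ 2*c := by exact_mod_cast Nat.succ_le_of_lt hbig
      nlinarith [mul_le_mul_of_nonneg_right hlt1 hA0.le]
    · by_cases hT2c : (k:ℝ)*A + l*B < 2*c*A
      · linarith
      · push_neg at hT2c
        have hcDnn : (0:ℝ) ≤ (c:ℝ)*D := by nlinarith
        suffices KEY : ((k:ℝ)*A + l*B)^c < (c:ℝ)^c * (A^k*B^l) by
          by_contra hcon
          push_neg at hcon
          have hp1 : ((c:ℝ)*D)^c ≤ ((k:ℝ)*A + l*B)^c := pow_le_pow_left₀ hcDnn hcon c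
          have hp2 : (c:ℝ)^c * (A^k*B^l) ≤ ((c:ℝ)*D)^c := by
            rw [mul_pow]
            exact mul_le_mul_of_nonneg_left h1 (by positivity)
          linarith
        have hccR : (1:ℝ) ≤ (c:ℝ)^c := one_le_pow₀ (by exact_mod_cast hc1)
        have hfin : A^k ≤ (c:ℝ)^c * (A^k*B^l) := by
          calc A^k = A^k * 1 := (mul_one _).symm
            _ ≤ A^k * B^l := mul_le_mul_of_nonneg_left hBl1 (pow_nonneg hA0.le k)
            _ ≤ (c:ℝ)^c * (A^k*B^l) := le_mul_of_one_le_left (by positivity) hccR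
        rcases lt_or_ge k (2*c) with hk2c | h2ck
        · -- case 2b : k < 2c
          have hm1 : 1 ≤ 2*c - k := by omega
          have hmlN : 2*c - k ≤ l := by omega
          have hl1 : 1 ≤ l := by omega
          have hlR : (0:ℝ) < l := by exact_mod_cast hl1
          have hkm : k + (2*c - k) = 2*c := by omega
          have hkmR : (k:ℝ) + ((2*c - k : ℕ):ℝ) = 2*(c:ℝ) := by exact_mod_cast hkm
          have hmR0 : (0:ℝ) < ((2*c - k : ℕ):ℝ) := by exact_mod_cast hm1
          have h2cA : 2*(c:ℝ)*A = (k:ℝ)*A + ((2*c - k : ℕ):ℝ)*A := by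
            rw [← hkmR]; ring
          have hmA : ((2*c - k : ℕ):ℝ)*A ≤ (l:ℝ)*B := by linarith
          have hmAnn : (0:ℝ) ≤ ((2*c - k : ℕ):ℝ)*A := by positivity
          have h2clB : 2*(c:ℝ)*((l:ℝ)*B) = (k:ℝ)*((l:ℝ)*B) + ((2*c - k : ℕ):ℝ)*((l:ℝ)*B) := by
            rw [← hkmR]; ring
          have hkmA : (k:ℝ)*(((2*c - k : ℕ):ℝ)*A) ≤ (k:ℝ)*((l:ℝ)*B) :=
            mul_le_mul_of_nonneg_left hmA (Nat.cast_nonneg k)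
          have hmT : ((2*c - k : ℕ):ℝ)*((k:ℝ)*A+(l:ℝ)*B) ≤ 2*(c:ℝ)*((l:ℝ)*B) := by
            nlinarith [hkmA, h2clB, mul_le_mul_of_nonneg_left hmA hmR0.le]
          have hmTnn : (0:ℝ) ≤ ((2*c - k : ℕ):ℝ)*((k:ℝ)*A+(l:ℝ)*B) := by positivity
          rcases le_or_gt c l with hcl | hlc
          · -- 2b-i : c ≤ l
            obtain ⟨e, he⟩ : ∃ e, l = c + e := ⟨l - c, by omega⟩
            have hNA := auxNA k c l hk (by omega) hmlN hcl hkl3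
            have hNAR : (2:ℝ)^c * (l:ℝ)^l < ((2*c - k : ℕ):ℝ)^l * A^(k+l-c) := by
              have hn1 : (2:ℝ)^c * (l:ℝ)^l < ((2*c - k : ℕ):ℝ)^l * ((k:ℝ)+(l:ℝ))^(k+l-c) := by
                exact_mod_cast hNA
              have hn2 : ((k:ℝ)+(l:ℝ))^(k+l-c) ≤ A^(k+l-c) :=
                pow_le_pow_left₀ (by positivity) h5 _
              have hn3 : (0:ℝ) ≤ ((2*c - k : ℕ):ℝ)^l := by positivity
              nlinarith [mul_le_mul_of_nonneg_left hn2 hn3]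
            have hbase : (((2*c - k : ℕ):ℝ)*A)^e ≤ ((l:ℝ)*B)^e := pow_le_pow_left₀ hmAnn hmA e
            have hchain : (((2*c - k : ℕ):ℝ)^c*(l:ℝ)^e) * ((k:ℝ)*A+(l:ℝ)*B)^c
                < (((2*c - k : ℕ):ℝ)^c*(l:ℝ)^e) * ((c:ℝ)^c*(A^k*B^l)) := by
              have hs1 : (((2*c - k : ℕ):ℝ)*((k:ℝ)*A+(l:ℝ)*B))^c ≤ (2*(c:ℝ)*((l:ℝ)*B))^c :=
                pow_le_pow_left₀ hmTnn hmT c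
              have hml' : ((2*c - k : ℕ):ℝ)^l = ((2*c - k : ℕ):ℝ)^c * ((2*c - k : ℕ):ℝ)^e := by
                rw [← pow_add, ← he]
              have hAexp : A^(k+l-c) = A^k * A^e := by
                rw [← pow_add]; congr 1; omega
              have hBl : B^l = B^c * B^e := by rw [← pow_add, ← he]
              calc (((2*c - k : ℕ):ℝ)^c*(l:ℝ)^e) * ((k:ℝ)*A+(l:ℝ)*B)^c
                  = (((2*c - k : ℕ):ℝ)*((k:ℝ)*A+(l:ℝ)*B))^c * (l:ℝ)^e := by
                    rw [mul_pow]; ring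
                _ ≤ (2*(c:ℝ)*((l:ℝ)*B))^c * (l:ℝ)^e :=
                    mul_le_mul_of_nonneg_right hs1 (by positivity)
                _ = (2*(c:ℝ))^c * ((l:ℝ)^c * (l:ℝ)^e) * B^c := by
                    rw [mul_pow, mul_pow]; ring
                _ = ((2:ℝ)^c * (l:ℝ)^l) * ((c:ℝ)^c * B^c) := by
                    rw [← pow_add, ← he, mul_pow]; ring
                _ < (((2*c - k : ℕ):ℝ)^l * A^(k+l-c)) * ((c:ℝ)^c * B^c) :=
                    mul_lt_mul_of_pos_right hNAR (by positivity)
                _ = (((2*c - k : ℕ):ℝ)*A)^e * (((2*c - k : ℕ):ℝ)^c * (c:ℝ)^c * A^k * B^c) := by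
                    rw [hml', hAexp, mul_pow]; ring
                _ ≤ ((l:ℝ)*B)^e * (((2*c - k : ℕ):ℝ)^c * (c:ℝ)^c * A^k * B^c) :=
                    mul_le_mul_of_nonneg_right hbase (by positivity)
                _ = (((2*c - k : ℕ):ℝ)^c*(l:ℝ)^e) * ((c:ℝ)^c*(A^k*B^l)) := by
                    rw [hBl, mul_pow]; ring
            exact lt_of_mul_lt_mul_left hchain (by positivity)
          · -- 2b-ii : l < c
            obtain ⟨p, hp⟩ : ∃ p, c = l + p := ⟨c - l, by omega⟩
            have hql : l ≤ 2*l - (2*c - k) := by omega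
            have hkpq : k = 2*p + (2*l - (2*c - k)) := by omega
            have h2cAle : 2*(c:ℝ) ≤ A := by
              have hx : ((2*c:ℕ):ℝ) ≤ ((k+l:ℕ):ℝ) := by exact_mod_cast hsmall
              push_cast at hx
              linarith
            have hllcc : (l:ℝ)^l < (c:ℝ)^c := by
              have hn : l^l < c^c :=
                calc l^l ≤ c^l := Nat.pow_le_pow_left (by omega) l
                  _ < c^c := Nat.pow_lt_pow_right (by omega) (by omega)
              exact_mod_cast hn
            have hm1R : (1:ℝ) ≤ ((2*c - k : ℕ):ℝ)^l := one_le_pow₀ (by exact_mod_cast hm1)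
            have hinner : (2*(c:ℝ))^l * (l:ℝ)^l
                < ((2*c - k : ℕ):ℝ)^l * ((c:ℝ)^c * A^(2*l - (2*c - k))) := by
              have hA2cl : (2*(c:ℝ))^l ≤ A^l := pow_le_pow_left₀ (by positivity) h2cAle l
              have hAq : A^l ≤ A^(2*l - (2*c - k)) := pow_le_pow_right₀ hA1 hql
              calc (2*(c:ℝ))^l * (l:ℝ)^l < (2*(c:ℝ))^l * (c:ℝ)^c :=
                    mul_lt_mul_of_pos_left hllcc (by positivity)
                _ ≤ A^(2*l - (2*c - k)) * (c:ℝ)^c :=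
                    mul_le_mul_of_nonneg_right (le_trans hA2cl hAq) (by positivity)
                _ = (A^(2*l - (2*c - k)) * (c:ℝ)^c) * 1 := (mul_one _).symm
                _ ≤ (A^(2*l - (2*c - k)) * (c:ℝ)^c) * ((2*c - k : ℕ):ℝ)^l :=
                    mul_le_mul_of_nonneg_left hm1R (by positivity)
                _ = ((2*c - k : ℕ):ℝ)^l * ((c:ℝ)^c * A^(2*l - (2*c - k))) := by ring
            have hs1 : (((2*c - k : ℕ):ℝ)*((k:ℝ)*A+(l:ℝ)*B))^l ≤ (2*(c:ℝ)*((l:ℝ)*B))^l :=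
              pow_le_pow_left₀ hmTnn hmT l
            have hs2 : ((k:ℝ)*A+(l:ℝ)*B)^p ≤ (A*A)^p := pow_le_pow_left₀ hTnn hTA2 p
            have hchain : ((2*c - k : ℕ):ℝ)^l * ((k:ℝ)*A+(l:ℝ)*B)^c
                < ((2*c - k : ℕ):ℝ)^l * ((c:ℝ)^c*(A^k*B^l)) := by
              calc ((2*c - k : ℕ):ℝ)^l * ((k:ℝ)*A+(l:ℝ)*B)^c
                  = (((2*c - k : ℕ):ℝ)*((k:ℝ)*A+(l:ℝ)*B))^l * ((k:ℝ)*A+(l:ℝ)*B)^p := by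
                    rw [hp, pow_add, mul_pow]; ring
                _ ≤ (2*(c:ℝ)*((l:ℝ)*B))^l * (A*A)^p :=
                    mul_le_mul hs1 hs2 (pow_nonneg hTnn p) (by positivity)
                _ = ((2*(c:ℝ))^l * (l:ℝ)^l) * (B^l * (A^p*A^p)) := by
                    rw [mul_pow, mul_pow, mul_pow]; ring
                _ < (((2*c - k : ℕ):ℝ)^l * ((c:ℝ)^c * A^(2*l - (2*c - k)))) * (B^l * (A^p*A^p)) :=
                    mul_lt_mul_of_pos_right hinner (by positivity)
                _ = ((2*c - k : ℕ):ℝ)^l * ((c:ℝ)^c*(A^k*B^l)) := by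
                    have hAk : A^k = A^p * A^p * A^(2*l - (2*c - k)) := by
                      rw [← pow_add, ← pow_add]
                      congr 1
                      omega
                    rw [hAk]; ring
            exact lt_of_mul_lt_mul_left hchain (by positivity)
        · -- case 2a : 2c ≤ k
          have hAA : ((k:ℝ)*A+l*B)^c ≤ A^(2*c) := by
            calc ((k:ℝ)*A+l*B)^c ≤ (A*A)^c := pow_le_pow_left₀ hTnn hTA2 c
              _ = A^(2*c) := by rw [mul_pow, ← pow_add, two_mul]
          rcases eq_or_lt_of_le h2ck with heq | hlt2
          · -- k = 2c
            rcases Nat.eq_zero_or_pos l with hl0 | hl1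
            · -- l = 0
              subst hl0
              simp only [Nat.cast_zero, zero_mul, add_zero, pow_zero, mul_one]
              have hkR : (k:ℝ) = 2*c := by exact_mod_cast heq.symm
              have h2A : 2*A < A*A := by nlinarith
              calc ((k:ℝ)*A)^c = ((c:ℝ)*(2*A))^c := by rw [hkR]; ring_nf
                _ = (c:ℝ)^c * (2*A)^c := mul_pow _ _ _
                _ < (c:ℝ)^c * (A*A)^c := by
                    apply mul_lt_mul_of_pos_left _ (by positivity)
                    exact pow_lt_pow_left₀ h2A (by linarith) (by omega)
                _ = (c:ℝ)^c * A^k := by rw [mul_pow, ← pow_add, ← two_mul, heq]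
            · -- l ≥ 1
              have hAkA : A^(2*c) = A^k := by rw [heq]
              rcases eq_or_lt_of_le h3 with hBA | hBA
              · -- B = A
                have hA1l : (1:ℝ) < A^l := one_lt_pow₀ (by linarith) (by omega)
                calc ((k:ℝ)*A+l*B)^c ≤ A^k := by rw [← hAkA]; exact hAA
                  _ = A^k * 1 := (mul_one _).symm
                  _ < A^k * B^l := by
                      rw [hBA]
                      exact mul_lt_mul_of_pos_left hA1l (by positivity)
                  _ ≤ (c:ℝ)^c * (A^k*B^l) := le_mul_of_one_le_left (by positivity) hccR
              · -- B < A
                have hl1R : (1:ℝ) ≤ l := by exact_mod_cast hl1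
                have hlB : (l:ℝ)*B < (l:ℝ)*A :=
                  mul_lt_mul_of_pos_left hBA (by linarith)
                have h5A : ((k:ℝ)+l)*A ≤ A*A := mul_le_mul_of_nonneg_right h5 hA0.le
                have hTs : (k:ℝ)*A + l*B < A*A := by linarith
                calc ((k:ℝ)*A+l*B)^c < (A*A)^c := pow_lt_pow_left₀ hTs hTnn (by omega)
                  _ = A^(2*c) := by rw [mul_pow, ← pow_add, ← two_mul]
                  _ = A^k := hAkA
                  _ ≤ (c:ℝ)^c * (A^k*B^l) := hfin
          · -- 2c < k
            calc ((k:ℝ)*A+l*B)^c ≤ A^(2*c) := hAA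
              _ < A^k := pow_lt_pow_right₀ (by linarith : (1:ℝ) < A) hlt2
              _ ≤ (c:ℝ)^c * (A^k*B^l) := hfin
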